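/- Let a(n) ∈ {0, …, L−1} be defined by a(n) ≡ Σ_{d≥2} Σ_{y≥0} μ_d(y)·d(n; k^y + k^{y+1} + … + k^{y+d−1}) (mod L), where d(n; k^y+…+k^{y+d−1}) indicates that the block of d consecutive digits all equal to 1 occurs at position y in the base-k representation of n, and μ_d : ℕ → {0,…,L−1}. Then for all positive integers N, l, n, t and 0 ≤ j ≤ k^n, one has a(N + l·(k^{N+l+1+n}·t + j)) ≡ a(N + l·j) + a(l·k^{N+l+1+n}·t) (mod L). -/

import Mathlib

/-- Indicator (valued in `ZMod L`) that the base-`k` digits of `m` at positions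
`y, y+1, ..., y+d-1` are all equal to `1`. -/
def onesBlock (k L : ℕ) (d y m : ℕ) : ZMod L :=
  if ∀ i < d, m / k ^ (y + i) % k = 1 then 1 else 0

lemma onesBlock_eq_zero_of_lt {k L : ℕ} (hk : 2 ≤ k) {d y m : ℕ} (hd : 1 ≤ d)
    (hm : m < k ^ (y + (d - 1))) : onesBlock k L d y m = 0 := by
  simp only [onesBlock]
  rw [if_neg]
  push_neg
  refine ⟨d - 1, by omega, ?_⟩
  rw [Nat.div_eq_of_lt hm, Nat.zero_mod]
  omega

lemma lt_pow_of_lt {k m z : ℕ} (hk : 2 ≤ k) (h : m + 1 ≤ z) : m < k ^ z := by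
  calc m < z := by omega
  _ < 2 ^ z := Nat.lt_two_pow_self
  _ ≤ k ^ z := Nat.pow_le_pow_left hk z

/-- The sequence `a n ≡ ∑_{d ≥ 2} ∑_{y ≥ 0} μ d y · d(n; k^y + ⋯ + k^{y+d-1}) (mod L)`
(for each `n` only the terms with `d ≤ n + 2` and `y ≤ n` can be nonzero, so the
truncated sums below agree with the full sums) satisfies the splitting congruence
`a (N + l (k^{N+l+1+n} t + j)) ≡ a (N + l j) + a (l k^{N+l+1+n} t) (mod L)`
for all positive `N, l, n, t` and `0 ≤ j ≤ k^n`. -/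
theorem onesBlockSum_split {k L : ℕ} (hk : 2 ≤ k) (hL : 2 ≤ L)
    (μ : ℕ → ℕ → ZMod L) (a : ℕ → ZMod L)
    (haDef : ∀ m : ℕ, a m = ∑ d ∈ Finset.Icc 2 (m + 2), ∑ y ∈ Finset.range (m + 1),
      μ d y * onesBlock k L d y m) :
    ∀ N l n t : ℕ, 1 ≤ N → 1 ≤ l → 1 ≤ n → 1 ≤ t → ∀ j : ℕ, j ≤ k ^ n →
      a (N + l * (k ^ (N + l + 1 + n) * t + j)) =
        a (N + l * j) + a (l * k ^ (N + l + 1 + n) * t) := by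
  -- first, a lemma: the truncated sums can be extended arbitrarily
  have hk1 : 1 ≤ k := by omega
  have hk0 : 0 < k := by omega
  have hext : ∀ (m D Y : ℕ), m + 2 ≤ D → m + 1 ≤ Y →
      (∑ d ∈ Finset.Icc 2 D, ∑ y ∈ Finset.range Y, μ d y * onesBlock k L d y m) = a m := by
    intro m D Y hD hY
    have inner : ∀ d, 2 ≤ d →
        (∑ y ∈ Finset.range Y, μ d y * onesBlock k L d y m) =
        ∑ y ∈ Finset.range (m + 1), μ d y * onesBlock k L d y m := by
      intro d hd
      symm
      apply Finset.sum_subset (Finset.range_subset_range.2 hY)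
      intro y _ hy
      have hy' : m + 1 ≤ y := by simpa using hy
      have : onesBlock k L d y m = 0 := by
        apply onesBlock_eq_zero_of_lt hk (by omega)
        exact lt_of_lt_of_le (lt_pow_of_lt hk hy') (Nat.pow_le_pow_right hk1 (by omega))
      rw [this, mul_zero]
    rw [haDef]
    symm
    rw [Finset.sum_subset (Finset.Icc_subset_Icc_right hD)]
    · apply Finset.sum_congr rfl
      intro d hd
      have hd2 : 2 ≤ d := (Finset.mem_Icc.1 hd).1
      exact (inner d hd2).symm
    · intro d hd hd'
      have hd2 : 2 ≤ d := (Finset.mem_Icc.1 hd).1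
      have hdm : m + 3 ≤ d := by
        have := Finset.mem_Icc.not.1 hd'
        push_neg at this
        have := Finset.mem_Icc.1 hd
        omega
      apply Finset.sum_eq_zero
      intro y _
      have : onesBlock k L d y m = 0 := by
        apply onesBlock_eq_zero_of_lt hk (by omega)
        exact lt_of_lt_of_le (lt_pow_of_lt hk (by omega : m + 1 ≤ d - 1))
          (Nat.pow_le_pow_right hk1 (by omega))
      rw [this, mul_zero]
  intro N l n t hN hl hn ht j hj
  have hexp : N + l + 1 + n = N + l + n + 1 := by ring
  rw [hexp]
  set P := N + l + n with hP
  set A := N + l * j with hA'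
  set B := l * k ^ (P + 1) * t with hB'
  have hBe : B = k ^ (P + 1) * (l * t) := by rw [hB']; ring
  have hXe : N + l * (k ^ (P + 1) * t + j) = A + k ^ (P + 1) * (l * t) := by rw [hA']; ring
  set X := A + k ^ (P + 1) * (l * t) with hX'
  rw [hXe]
  -- A is small
  have hAlt : A < k ^ P := by
    have h1 : A ≤ N + l * k ^ n := by
      rw [hA']; gcongr
    have h2 : N + l * k ^ n ≤ (N + l) * k ^ n := by
      have : N ≤ N * k ^ n := Nat.le_mul_of_pos_right N (pow_pos hk0 n)
      nlinarith
    have h3 : (N + l) * k ^ n < k ^ (N + l) * k ^ n := by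
      have h4 : N + l < k ^ (N + l) :=
        lt_of_lt_of_le Nat.lt_two_pow_self (Nat.pow_le_pow_left hk _)
      exact (Nat.mul_lt_mul_right (pow_pos hk0 n)).2 h4
    calc A ≤ (N + l) * k ^ n := le_trans h1 h2
    _ < k ^ (N + l) * k ^ n := h3
    _ = k ^ P := by rw [← pow_add]
  have hAlt1 : A < k ^ (P + 1) :=
    lt_of_lt_of_le hAlt (Nat.pow_le_pow_right hk1 (by omega))
  -- digit lemmas
  have digA0 : ∀ z, P ≤ z → A / k ^ z % k = 0 := by
    intro z hz
    rw [Nat.div_eq_of_lt (lt_of_lt_of_le hAlt (Nat.pow_le_pow_right hk1 hz)), Nat.zero_mod]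
  have digB0 : ∀ z, z ≤ P → B / k ^ z % k = 0 := by
    intro z hz
    have h : B = k ^ z * (k * (k ^ (P - z) * (l * t))) := by
      rw [hBe]
      rw [show k ^ (P + 1) = k ^ z * (k * k ^ (P - z)) by
        rw [← pow_succ', ← pow_add]; congr 1; omega]
      ring
    rw [h, Nat.mul_div_cancel_left _ (pow_pos hk0 z), Nat.mul_mod_right]
  have digXlow : ∀ z, z ≤ P → X / k ^ z % k = A / k ^ z % k := by
    intro z hz
    have h : X = A + k ^ z * (k * (k ^ (P - z) * (l * t))) := by
      rw [hX']
      rw [show k ^ (P + 1) = k ^ z * (k * k ^ (P - z)) by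
        rw [← pow_succ', ← pow_add]; congr 1; omega]
      ring
    rw [h, Nat.add_mul_div_left _ _ (pow_pos hk0 z)]
    rw [Nat.add_mul_mod_self_left]
  have digXhigh : ∀ z, P + 1 ≤ z → X / k ^ z = B / k ^ z := by
    intro z hz
    have h1 : X / k ^ (P + 1) = l * t := by
      rw [hX', Nat.add_mul_div_left _ _ (pow_pos hk0 _),
        Nat.div_eq_of_lt hAlt1, Nat.zero_add]
    have h2 : B / k ^ (P + 1) = l * t := by
      rw [hBe, Nat.mul_div_cancel_left _ (pow_pos hk0 _)]
    rw [show k ^ z = k ^ (P + 1) * k ^ (z - (P + 1)) by rw [← pow_add]; congr 1; omega,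
      ← Nat.div_div_eq_div_mul, ← Nat.div_div_eq_div_mul, h1, h2]
  -- pointwise splitting of the indicators
  have hblock : ∀ d y, 1 ≤ d →
      onesBlock k L d y X = onesBlock k L d y A + onesBlock k L d y B := by
    intro d y hd
    by_cases h1 : y + d ≤ P + 1
    · have hBz : onesBlock k L d y B = 0 := by
        simp only [onesBlock]
        rw [if_neg]
        push_neg
        refine ⟨0, by omega, ?_⟩
        rw [add_zero, digB0 y (by omega)]
        omega
      rw [hBz, add_zero]
      simp only [onesBlock]
      have hiff : (∀ i < d, X / k ^ (y + i) % k = 1) ↔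
          (∀ i < d, A / k ^ (y + i) % k = 1) := by
        apply forall₂_congr
        intro i hi
        rw [digXlow (y + i) (by omega)]
      exact if_congr hiff rfl rfl
    · by_cases h2 : P + 1 ≤ y
      · have hAz : onesBlock k L d y A = 0 := by
          simp only [onesBlock]
          rw [if_neg]
          push_neg
          refine ⟨0, by omega, ?_⟩
          rw [add_zero, digA0 y (by omega)]
          omega
        rw [hAz, zero_add]
        simp only [onesBlock]
        have hiff : (∀ i < d, X / k ^ (y + i) % k = 1) ↔
            (∀ i < d, B / k ^ (y + i) % k = 1) := by
          apply forall₂_congr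
          intro i hi
          rw [digXhigh (y + i) (by omega)]
        exact if_congr hiff rfl rfl
      · -- straddling case: everything vanishes
        have hy : y ≤ P := by omega
        have hyd : P + 2 ≤ y + d := by omega
        have hXz : onesBlock k L d y X = 0 := by
          simp only [onesBlock]
          rw [if_neg]
          push_neg
          refine ⟨P - y, by omega, ?_⟩
          rw [show y + (P - y) = P by omega, digXlow P le_rfl, digA0 P le_rfl]
          omega
        have hAz : onesBlock k L d y A = 0 := by
          simp only [onesBlock]
          rw [if_neg]
          push_neg
          refine ⟨d - 1, by omega, ?_⟩
          rw [digA0 (y + (d - 1)) (by omega)]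
          omega
        have hBz : onesBlock k L d y B = 0 := by
          simp only [onesBlock]
          rw [if_neg]
          push_neg
          refine ⟨0, by omega, ?_⟩
          rw [add_zero, digB0 y (by omega)]
          omega
        rw [hXz, hAz, hBz, add_zero]
  -- assemble
  have hAX : A ≤ X := Nat.le_add_right _ _
  have hBX : B ≤ X := by rw [hBe, hX']; exact Nat.le_add_left _ _
  rw [haDef X, ← hext A (X + 2) (X + 1) (by omega) (by omega),
    ← hext B (X + 2) (X + 1) (by omega) (by omega), ← Finset.sum_add_distrib]
  apply Finset.sum_congr rfl
  intro d hd
  rw [← Finset.sum_add_distrib]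
  apply Finset.sum_congr rfl
  intro y _
  have hd2 : 2 ≤ d := (Finset.mem_Icc.1 hd).1
  rw [hblock d y (by omega), mul_add]
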